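/- Let γ = [k; \overline{u,…,u,2k}] with ℓ entries u in the period, and let p_i/q_i be the convergents. Then γ = √D for some natural number D if and only if q_ℓ divides k·p_ℓ + p_{ℓ−1}. -/

import Mathlib

/-- Let `γ = [k; \overline{u,…,u,2k}]` with `ℓ` copies of `u`, and `p i / q i` its
convergents (here `Q n = q_{n-1}` and `P i = p_i = k q_i + q_{i-1}`).  Then
`γ = √D` for some natural number `D` iff `q_ℓ ∣ k p_ℓ + p_{ℓ-1}`. -/
theorem stmt11 (u k ℓ : ℕ) (hu : 0 < u) (hk : 0 < k) (hℓ : 1 ≤ ℓ) (γ : ℝ)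
    (hh : (GenContFract.of γ).h = (k : ℝ))
    (hcf : ∀ n : ℕ, (GenContFract.of γ).partDens.get? n =
      some (if n % (ℓ + 1) = ℓ then (2 * k : ℝ) else (u : ℝ)))
    (Q : ℕ → ℤ) (h0 : Q 0 = 0) (h1 : Q 1 = 1)
    (hrec : ∀ n, Q (n + 2) = u * Q (n + 1) + Q n)
    (P : ℕ → ℤ) (hP : ∀ i, P i = k * Q (i + 1) + Q i) :
    (∃ d : ℕ, γ = Real.sqrt d) ↔ Q (ℓ + 1) ∣ k * P ℓ + P (ℓ - 1) := by
  classical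
  set a : ℕ → ℝ := fun n => if n % (ℓ + 1) = ℓ then (2 * k : ℝ) else (u : ℝ) with ha
  set x : ℕ → ℝ := fun n => ((fun v : ℝ => (Int.fract v)⁻¹)^[n]) γ with hxdef
  have hx0 : x 0 = γ := rfl
  have hxs : ∀ n, x (n + 1) = (Int.fract (x n))⁻¹ := fun n =>
    Function.iterate_succ_apply' _ _ _
  -- partial denominators of all complete quotients
  have hpd : ∀ n m : ℕ, (GenContFract.of (x n)).partDens.get? m = some (a (n + m)) := by
    intro n
    induction n with
    | zero => intro m; simpa [hx0, ha] using hcf m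
    | succ n ih =>
      intro m
      have h2 : (GenContFract.of (x (n + 1))).partDens.get? m
          = (GenContFract.of (x n)).partDens.get? (m + 1) := by
        simp only [GenContFract.partDens, Stream'.Seq.map_get?, hxs n,
          ← GenContFract.of_s_succ (x n) m]
      rw [h2, ih (m + 1)]
      congr 2
      omega
  -- sequence entries
  have hs : ∀ n m, (GenContFract.of (x n)).s.get? m = some ⟨1, a (n + m)⟩ := by
    intro n m
    obtain ⟨gp, hgp, hb⟩ := GenContFract.exists_s_b_of_partDen (hpd n m)
    have ha1 := (GenContFract.of_partNum_eq_one_and_exists_int_partDen_eq hgp).1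
    rw [hgp]
    cases gp
    simp_all
  -- fractional parts never vanish
  have hfr : ∀ n, Int.fract (x n) ≠ 0 := by
    intro n hzero
    have hxint : x n = ((⌊x n⌋ : ℤ) : ℝ) := by
      have := Int.fract_add_floor (x n)
      rw [hzero] at this
      push_cast at this ⊢
      linarith
    have h2 := hs n 0
    rw [hxint, GenContFract.of_s_of_int] at h2
    simp at h2
  have hfr01 : ∀ n, 0 < Int.fract (x n) ∧ Int.fract (x n) < 1 := fun n =>
    ⟨lt_of_le_of_ne (Int.fract_nonneg _) (Ne.symm (hfr n)), Int.fract_lt_one _⟩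
  have hxgt : ∀ n, 1 < x (n + 1) := by
    intro n
    rw [hxs n]
    exact (one_lt_inv_iff₀).2 ⟨(hfr01 n).1, (hfr01 n).2⟩
  -- floors of complete quotients are the partial denominators
  have hfl : ∀ n, ((⌊x (n + 1)⌋ : ℤ) : ℝ) = a n := by
    intro n
    have h1 : (GenContFract.of (x n)).s.get? 0 = some ⟨1, a n⟩ := by
      simpa using hs n 0
    have h2 : (GenContFract.of (x n)).s.get? 0
        = some ⟨1, ((⌊(Int.fract (x n))⁻¹⌋ : ℤ) : ℝ)⟩ := GenContFract.of_s_head (hfr n)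
    rw [h1] at h2
    rw [hxs n]
    simpa using (congrArg (fun p => Option.map GenContFract.Pair.b p) h2).symm
  -- recurrence for complete quotients
  have hxrec : ∀ n, x n = ((⌊x n⌋ : ℤ) : ℝ) + (x (n + 1))⁻¹ := by
    intro n
    rw [hxs n, inv_inv]
    have := Int.fract_add_floor (x n)
    linarith
  have hxrec' : ∀ n, x (n + 1) = a n + (x (n + 2))⁻¹ := by
    intro n
    rw [← hfl n]
    exact hxrec (n + 1)
  -- γ = k + 1/x1
  have hfloorγ : ((⌊γ⌋ : ℤ) : ℝ) = (k : ℝ) := by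
    rw [← GenContFract.of_h_eq_floor]; exact hh
  have hγeq : γ = (k : ℝ) + (x 1)⁻¹ := by
    have := hxrec 0
    rw [hx0] at this
    rw [this, hfloorγ]
  -- periodicity: x 1 = x (ℓ + 2)
  have haper : ∀ m, a (m + (ℓ + 1)) = a m := by
    intro m
    simp only [ha, Nat.add_mod_right]
  have hgeq : GenContFract.of (x 1) = GenContFract.of (x (ℓ + 2)) := by
    ext1
    · rw [GenContFract.of_h_eq_floor, GenContFract.of_h_eq_floor]
      have e1 : ((⌊x 1⌋ : ℤ) : ℝ) = a 0 := hfl 0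
      have e2 : ((⌊x (ℓ + 2)⌋ : ℤ) : ℝ) = a (ℓ + 1) := hfl (ℓ + 1)
      have e3 : a (ℓ + 1) = a 0 := by simpa using haper 0
      rw [e1, e2, e3]
    · apply Stream'.Seq.ext
      intro m
      rw [hs 1 m, hs (ℓ + 2) m]
      have : ℓ + 2 + m = (1 + m) + (ℓ + 1) := by omega
      rw [this, haper]
  have hx1eq : x 1 = x (ℓ + 2) := by
    have t1 := GenContFract.of_convergence (x 1)
    have t2 := GenContFract.of_convergence (x (ℓ + 2))
    rw [← hgeq] at t2
    exact tendsto_nhds_unique t1 t2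
  -- positivity of Q
  have hQ : ∀ n, 0 ≤ Q n ∧ 0 < Q (n + 1) := by
    intro n
    induction n with
    | zero => simp [h0, h1]
    | succ n ih =>
      refine ⟨ih.2.le, ?_⟩
      rw [hrec]
      have hu1 : (1 : ℤ) ≤ (u : ℤ) := by exact_mod_cast hu
      nlinarith [ih.1, ih.2]
  set y : ℝ := x (ℓ + 1) with hy
  -- key recurrence
  have key : ∀ j, j ≤ ℓ → x (ℓ + 1 - j) * ((Q j : ℝ) * y + ((Q (j + 1) : ℝ) - (u : ℝ) * (Q j : ℝ)))
      = (Q (j + 1) : ℝ) * y + (Q j : ℝ) := by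
    intro j
    induction j with
    | zero => intro _; simp [h0, h1, hy]
    | succ j ih =>
      intro hjl
      have hj : j ≤ ℓ := by omega
      have ihj := ih hj
      have hne : x (ℓ + 1 - j) ≠ 0 := by
        have : ℓ + 1 - j = (ℓ - j) + 1 := by omega
        rw [this]
        exact ne_of_gt (lt_trans one_pos (hxgt (ℓ - j)))
      have e1 : ℓ + 1 - (j + 1) = (ℓ - j - 1) + 1 := by omega
      have e2 : ℓ + 1 - j = (ℓ - j - 1) + 2 := by omega
      have hstep : x (ℓ + 1 - (j + 1)) = (u : ℝ) + (x (ℓ + 1 - j))⁻¹ := by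
        rw [e1, e2, hxrec' (ℓ - j - 1)]
        congr 1
        simp only [ha]
        have hm : (ℓ - j - 1) % (ℓ + 1) = ℓ - j - 1 := Nat.mod_eq_of_lt (by omega)
        rw [hm, if_neg (by omega)]
      have h3 : (x (ℓ + 1 - j))⁻¹ * ((Q (j + 1) : ℝ) * y + (Q j : ℝ))
          = (Q j : ℝ) * y + ((Q (j + 1) : ℝ) - (u : ℝ) * (Q j : ℝ)) := by
        rw [← ihj, inv_mul_cancel_left₀ hne]
      rw [hstep, hrec j]
      push_cast
      linear_combination h3
  have keyℓ := key ℓ le_rfl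
  have e4 : ℓ + 1 - ℓ = 1 := by omega
  rw [e4] at keyℓ
  have hQm : (Q (ℓ + 1) : ℝ) - (u : ℝ) * (Q ℓ : ℝ) = (Q (ℓ - 1) : ℝ) := by
    have h5 := hrec (ℓ - 1)
    have e5 : ℓ - 1 + 2 = ℓ + 1 := by omega
    have e6 : ℓ - 1 + 1 = ℓ := by omega
    rw [e5, e6] at h5
    rw [h5]
    push_cast
    ring
  rw [hQm] at keyℓ
  -- y = γ + k
  have hyval : y = γ + (k : ℝ) := by
    have := hxrec' ℓ
    rw [← hy, ← hx1eq] at this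
    have haℓ : a ℓ = (2 * k : ℝ) := by
      simp only [ha]
      rw [Nat.mod_eq_of_lt (by omega), if_pos rfl]
    rw [this, haℓ, hγeq]
    ring
  -- x1 positivity and inverse
  have hx1pos : (0 : ℝ) < x 1 := lt_trans one_pos (hxgt 0)
  have hinv : (x 1)⁻¹ = γ - (k : ℝ) := by rw [hγeq]; ring
  -- the quadratic equation for γ
  have E : (Q ℓ : ℝ) * (γ + k) + (Q (ℓ - 1) : ℝ)
      = (γ - k) * ((Q (ℓ + 1) : ℝ) * (γ + k) + (Q ℓ : ℝ)) := by
    have := congrArg (fun t => (x 1)⁻¹ * t) keyℓ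
    rw [inv_mul_cancel_left₀ (ne_of_gt hx1pos), hinv, hyval] at this
    linarith [this]
  set M : ℤ := (k : ℤ) ^ 2 * Q (ℓ + 1) + 2 * k * Q ℓ + Q (ℓ - 1) with hM
  have hsq : (Q (ℓ + 1) : ℝ) * γ ^ 2 = (M : ℝ) := by
    push_cast [hM]
    linear_combination -E
  have hMP : k * P ℓ + P (ℓ - 1) = M := by
    rw [hP ℓ, hP (ℓ - 1), hM]
    have e6 : ℓ - 1 + 1 = ℓ := by omega
    rw [e6]
    ring
  have hQpos : (0 : ℤ) < Q (ℓ + 1) := (hQ ℓ).2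
  have hQposR : (0 : ℝ) < (Q (ℓ + 1) : ℝ) := by exact_mod_cast hQpos
  have hγpos : (0 : ℝ) < γ := by
    rw [hγeq]
    have : (0 : ℝ) < (k : ℝ) := by exact_mod_cast hk
    have := inv_pos.2 hx1pos
    linarith
  rw [hMP]
  constructor
  · rintro ⟨d, hd⟩
    have hγ2 : γ ^ 2 = (d : ℝ) := by
      rw [hd, Real.sq_sqrt (by positivity : (0 : ℝ) ≤ (d : ℝ))]
    have : (Q (ℓ + 1) : ℝ) * (d : ℝ) = (M : ℝ) := by rw [← hγ2]; exact hsq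
    have hzz : Q (ℓ + 1) * (d : ℤ) = M := by exact_mod_cast this
    exact ⟨(d : ℤ), hzz.symm⟩
  · rintro ⟨c, hc⟩
    have hγ2 : γ ^ 2 = (c : ℝ) := by
      have : (Q (ℓ + 1) : ℝ) * γ ^ 2 = (Q (ℓ + 1) : ℝ) * (c : ℝ) := by
        rw [hsq, hc]; push_cast; ring
      exact mul_left_cancel₀ (ne_of_gt hQposR) this
    have hc0 : (0 : ℤ) ≤ c := by
      have : (0 : ℝ) ≤ (c : ℝ) := hγ2 ▸ sq_nonneg γ
      exact_mod_cast this
    refine ⟨c.toNat, ?_⟩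
    have hcast : ((c.toNat : ℕ) : ℝ) = (c : ℝ) := by
      exact_mod_cast congrArg (fun z : ℤ => (z : ℝ)) (Int.toNat_of_nonneg hc0)
    rw [hcast, ← hγ2, Real.sqrt_sq hγpos.le]
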